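/- Let n = 2·3^p − 1 for an integer p ≥ 0. Then n is odd and 3n + 1 = 2·(3^{p+1} − 1). If p is even, then v₂(3n + 1) = 2 and C(n) = (3^{p+1} − 1)/2; if p is odd, then v₂(3n + 1) = v₂(p + 1) + 3 ≥ 4 (in particular greater than 2). -/

import Mathlib

/-- The Collatz operation on odd positive integers:
`C n = (3n+1)/2^{v₂(3n+1)}`. -/
def collatzC (n : ℕ) : ℕ := (3 * n + 1) / 2 ^ padicValNat 2 (3 * n + 1)

lemma three_pow_sub_one_val_even {p : ℕ} (hp : Odd p) :
    padicValNat 2 (3 ^ (p + 1) - 1) = padicValNat 2 (p + 1) + 2 := by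
  have h := padicValNat.pow_two_sub_pow (x := 3) (y := 1) (n := p + 1)
    (by norm_num) (by norm_num) (by norm_num) (by omega)
    (by exact Odd.add_one hp)
  simp only [one_pow] at h
  have h4 : padicValNat 2 (3 + 1) = 2 := by
    rw [show (3:ℕ) + 1 = 2 ^ 2 from rfl, padicValNat.prime_pow]
  have h2 : padicValNat 2 (3 - 1) = 1 := by norm_num [padicValNat.self]
  omega

lemma three_pow_sub_one_val_odd {p : ℕ} (hp : Even p) :
    padicValNat 2 (3 ^ (p + 1) - 1) = 1 := by
  obtain ⟨k, hk⟩ := hp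
  have h9 : 3 ^ (p + 1) % 4 = 3 := by
    have : (9 : ℕ) ^ k % 4 = 1 % 4 := by
      have : (9 : ℕ) ≡ 1 [MOD 4] := by decide
      simpa [Nat.ModEq] using this.pow k
    have h3 : 3 ^ (p + 1) = 3 * 9 ^ k := by
      rw [hk]
      rw [show k + k + 1 = 2*k + 1 by ring, pow_succ, pow_mul]
      norm_num [mul_comm]
    omega
  have hpos : 1 ≤ 3 ^ (p + 1) := Nat.one_le_pow _ _ (by norm_num)
  have h2 : 2 ∣ 3 ^ (p + 1) - 1 := by omega
  have h4 : ¬ 4 ∣ 3 ^ (p + 1) - 1 := by omega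
  obtain ⟨m, hm⟩ := h2
  have hmodd : ¬ 2 ∣ m := by omega
  rw [hm, padicValNat.mul (by norm_num) (by omega), padicValNat.self (by norm_num),
    padicValNat.eq_zero_of_not_dvd hmodd]

theorem collatz_of_two_mul_three_pow (p : ℕ) :
    Odd (2 * 3 ^ p - 1) ∧
    3 * (2 * 3 ^ p - 1) + 1 = 2 * (3 ^ (p + 1) - 1) ∧
    (Even p →
      padicValNat 2 (3 * (2 * 3 ^ p - 1) + 1) = 2 ∧
      collatzC (2 * 3 ^ p - 1) = (3 ^ (p + 1) - 1) / 2) ∧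
    (Odd p →
      padicValNat 2 (3 * (2 * 3 ^ p - 1) + 1) = padicValNat 2 (p + 1) + 3 ∧
      4 ≤ padicValNat 2 (p + 1) + 3) := by
  have hpos : 1 ≤ 3 ^ p := Nat.one_le_pow _ _ (by norm_num)
  have hpos1 : 1 ≤ 3 ^ (p + 1) := Nat.one_le_pow _ _ (by norm_num)
  have heq : 3 * (2 * 3 ^ p - 1) + 1 = 2 * (3 ^ (p + 1) - 1) := by
    have : 3 ^ (p + 1) = 3 * 3 ^ p := by ring
    omega
  have hval : padicValNat 2 (2 * (3 ^ (p + 1) - 1)) =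
      1 + padicValNat 2 (3 ^ (p + 1) - 1) := by
    have hne : 3 ^ (p + 1) - 1 ≠ 0 := by
      have : 3 ^ (p + 1) = 3 * 3 ^ p := by ring
      omega
    rw [padicValNat.mul (by norm_num) hne, padicValNat.self (by norm_num)]
  refine ⟨⟨3 ^ p - 1, by omega⟩, heq, ?_, ?_⟩
  · intro hp
    have h1 := three_pow_sub_one_val_odd hp
    have hv : padicValNat 2 (3 * (2 * 3 ^ p - 1) + 1) = 2 := by
      rw [heq, hval, h1]
    refine ⟨hv, ?_⟩
    unfold collatzC
    rw [hv, heq]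
    have : 2 * (3 ^ (p + 1) - 1) / 2 ^ 2 = (3 ^ (p + 1) - 1) / 2 := by
      obtain ⟨m, hm⟩ : 2 ∣ 3 ^ (p + 1) - 1 := by
        have h9 : 3 ^ (p + 1) % 2 = 1 := Nat.pow_mod 3 (p+1) 2 ▸ by simp
        omega
      rw [hm]
      omega
    rw [this]
  · intro hp
    have h1 := three_pow_sub_one_val_even hp
    have hv1 : 1 ≤ padicValNat 2 (p + 1) := by
      obtain ⟨k, hk⟩ := hp
      have : 2 ∣ p + 1 := by omega
      exact one_le_padicValNat_of_dvd (by omega) this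
    constructor
    · rw [heq, hval, h1]; omega
    · omega
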